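/- Pruning the transitions of a DATE that are not used by a given ground trace preserves its verdict on that trace: for any ground trace t ∈ Σ*, the DATE reach(D ↾ {d ∈ δ | uses(t, d)}) obtained by keeping only transitions used by t and applying the reachability reduction is equivalent to D with respect to the singleton set {t}. -/

import Mathlib

open Classical

/-- A property automaton over states `Q` and alphabet `E`: a deterministic and
total transition relation is represented as a transition function. -/
structure PA (Q : Type*) (E : Type*) where
  init : Q
  bad : Set Q
  next : Q → E → Q

namespace PA

variable {Q E : Type*}

/-- Iterated application of the transition function along a ground trace. -/
def run (π : PA Q E) (q : Q) (t : List E) : Q := t.foldl π.next q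

/-- A ground trace satisfies a property automaton iff no prefix of it leads
from the initial state to a bad state. -/
def Sat (t : List E) (π : PA Q E) : Prop :=
  ∀ t' : List E, t' <+: t → π.run π.init t' ∉ π.bad

/-- Equivalence of two property automata with respect to a set of ground traces. -/
def EquivOn (T : Set (List E)) (π π' : PA Q E) : Prop :=
  ∀ t ∈ T, Sat t π ↔ Sat t π'

end PA

/-- A static program: a set of static parametrised traces over identifiers `α`,
together with a must-alias equivalence relation and a may-alias relation. -/
structure SProg (α : Type*) (E : Type*) where
  traces : Set (List (α × E))
  must : α → α → Prop
  may : α → α → Prop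
  must_equiv : Equivalence must
  must_sub_may : ∀ {x y : α}, must x y → may x y

namespace SProg

variable {α E : Type*}

-- Projection of a static parametrised trace onto an identifier `x`,
-- yielding the set of possible ground traces.
open Classical in
noncomputable def proj (P : SProg α E) (x : α) : List (α × E) → Set (List E)
  | [] => {[]}
  | (x', e) :: st =>
      if P.must x x' then (e :: ·) '' P.proj x st
      else if P.may x x' then P.proj x st ∪ (e :: ·) '' P.proj x st
      else P.proj x st

/-- The projection of a static program onto a single identifier. -/
def projId (P : SProg α E) (x : α) : Set (List E) :=
  {t | ∃ st ∈ P.traces, t ∈ P.proj x st}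

/-- The projection of a static program onto all identifiers (`P ⇓ OId`). -/
def projAll (P : SProg α E) : Set (List E) :=
  {t | ∃ st ∈ P.traces, ∃ x : α, t ∈ P.proj x st}

end SProg

/-- Satisfaction of a property automaton by a static parametrised trace:
every projection onto every identifier satisfies the automaton. -/
def PA.SSat {α Q E : Type*} (P : SProg α E) (st : List (α × E)) (π : PA Q E) : Prop :=
  ∀ x : α, ∀ t ∈ P.proj x st, PA.Sat t π

/-- Equivalence of two property automata with respect to a static program. -/
def PA.SEquiv {α Q E : Type*} (P : SProg α E) (π π' : PA Q E) : Prop :=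
  ∀ st ∈ P.traces, PA.SSat P st π ↔ PA.SSat P st π'

/-- A transition of a DATE: source state, event, condition, action, target state. -/
structure DTrans (Q : Type*) (E : Type*) (Θ : Type*) where
  src : Q
  ev : E
  cond : Θ → Bool
  act : Θ → Θ
  tgt : Q

/-- A DATE (without timers/channels): states `Q`, events `E`, monitoring
variable states `Θ`, initial state, initial monitoring state, bad states,
and a transition relation. -/
structure DATE (Q : Type*) (E : Type*) (Θ : Type*) where
  init : Q
  th0 : Θ
  bad : Set Q
  delta : Set (DTrans Q E Θ)

namespace DATE

variable {Q E Θ : Type*}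

/-- Determinism: from each state, any two distinct transitions with the same
event have conditions that are never simultaneously true. -/
def Deterministic (D : DATE Q E Θ) : Prop :=
  ∀ d ∈ D.delta, ∀ d' ∈ D.delta,
    d.src = d'.src → d.ev = d'.ev → d ≠ d' →
      ∀ θ : Θ, ¬(d.cond θ = true ∧ d'.cond θ = true)

/-- The concrete transition function `Δ`. -/
noncomputable def step (D : DATE Q E Θ) (s : Q × Θ) (e : E) : Q × Θ :=
  if h : ∃ d ∈ D.delta, d.src = s.1 ∧ d.ev = e ∧ d.cond s.2 = true
  then (h.choose.tgt, h.choose.act s.2)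
  else s

/-- `Δ*`: iterated concrete transition function along a ground trace. -/
noncomputable def run (D : DATE Q E Θ) (s : Q × Θ) (t : List E) : Q × Θ :=
  t.foldl D.step s

/-- A ground trace satisfies a DATE iff no prefix of it drives `Δ*` from the
initial configuration into a bad state. -/
def Sat (t : List E) (D : DATE Q E Θ) : Prop :=
  ∀ t' : List E, t' <+: t → (D.run (D.init, D.th0) t').1 ∉ D.bad

/-- Equivalence of two DATEs with respect to a set of ground traces. -/
def EquivOn (T : Set (List E)) (D D' : DATE Q E Θ) : Prop :=
  ∀ t ∈ T, Sat t D ↔ Sat t D'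

/-- The static transition relation `q →e_approx q'`. -/
def ApproxStep (D : DATE Q E Θ) (q : Q) (e : E) (q' : Q) : Prop :=
  (∃ d ∈ D.delta, d.src = q ∧ d.ev = e ∧ d.tgt = q' ∧ ¬ ∀ θ : Θ, d.cond θ = false)
  ∨ (q' = q ∧ ¬ ∃ d ∈ D.delta, d.src = q ∧ d.ev = e ∧ d.tgt ≠ q ∧ ∀ θ : Θ, d.cond θ = true)

/-- The static transition function on sets of states. -/
def approxSet (D : DATE Q E Θ) (S : Set Q) (e : E) : Set Q :=
  {q' | ∃ q ∈ S, D.ApproxStep q e q'}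

/-- `approxΔ*`: iterated static transition function along a ground trace. -/
def approxRun (D : DATE Q E Θ) (S : Set Q) (t : List E) : Set Q :=
  t.foldl D.approxSet S

/-- `q ↪ q'`: `q'` is reachable from `q` via the static transition relation. -/
def Reach (D : DATE Q E Θ) (q q' : Q) : Prop :=
  ∃ t : List E, q' ∈ D.approxRun {q} t

/-- `badAfter(q)`: `q` is reachable from the initial state and can reach a bad state. -/
def BadAfter (D : DATE Q E Θ) (q : Q) : Prop :=
  D.Reach D.init q ∧ ∃ q' ∈ D.bad, D.Reach q q'

/-- `goodEntryPoint(q)`. -/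
def GoodEntryPoint (D : DATE Q E Θ) (q : Q) : Prop :=
  ¬ D.BadAfter q ∧ ∃ q' : Q, ∃ e : E, D.BadAfter q' ∧ D.ApproxStep q' e q

/-- `useful(q)`. -/
def Useful (D : DATE Q E Θ) (q : Q) : Prop :=
  D.BadAfter q ∨ D.GoodEntryPoint q

/-- Restriction of a DATE to a set of transitions (`D ↾ δ'`). -/
def restrict (D : DATE Q E Θ) (δ' : Set (DTrans Q E Θ)) : DATE Q E Θ :=
  { D with delta := D.delta ∩ δ' }

/-- The reachability-reduced DATE `reach(D)`: only useful states and
transitions between useful states are kept. -/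
def reachReduce (D : DATE Q E Θ) : DATE Q E Θ :=
  D.restrict {d | D.Useful d.src ∧ D.Useful d.tgt}

/-- Alphabet restriction `D ↾ Σ'`. -/
def alphaRestrict (D : DATE Q E Θ) (A : Set E) : DATE Q E Θ :=
  D.restrict {d | d.ev ∈ A}

/-- `Σ(T)`: the set of events occurring in some trace of `T`. -/
def eventsOf (T : Set (List E)) : Set E :=
  {e | ∃ t ∈ T, e ∈ t}

/-- Component-wise union of two DATEs (sharing initial state and initial
monitoring state). -/
def union (D₁ D₂ : DATE Q E Θ) : DATE Q E Θ :=
  { init := D₁.init, th0 := D₁.th0, bad := D₁.bad ∪ D₂.bad,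
    delta := D₁.delta ∪ D₂.delta }

/-- Component-wise union of a family of DATEs, with given initial state and
initial monitoring state. -/
def unionFamily {ι : Type*} (q0 : Q) (θ0 : Θ) (f : ι → DATE Q E Θ) : DATE Q E Θ :=
  { init := q0, th0 := θ0, bad := ⋃ i, (f i).bad, delta := ⋃ i, (f i).delta }

/-- A ground trace `t` uses a transition `d`. -/
def Uses (D : DATE Q E Θ) (t : List E) (d : DTrans Q E Θ) : Prop :=
  (¬ ∀ θ : Θ, d.cond θ = false) ∧
    ∃ t' : List E, (t' ++ [d.ev]) <+: t ∧ d.src ∈ D.approxRun {D.init} t'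

/-- Satisfaction of a DATE by a static parametrised trace. -/
def SSat {α : Type*} (P : SProg α E) (st : List (α × E)) (D : DATE Q E Θ) : Prop :=
  ∀ x : α, ∀ t ∈ P.proj x st, Sat t D

/-- Equivalence of two DATEs with respect to a static program. -/
def SEquiv {α : Type*} (P : SProg α E) (D D' : DATE Q E Θ) : Prop :=
  ∀ st ∈ P.traces, SSat P st D ↔ SSat P st D'

end DATE

/-- Translation of a property automaton into a DATE with `Θ = Unit`:
each transition `(q, e, q')` becomes `q —e|true↦skip→ q'`. -/
def PA.toDATE {Q E : Type*} (π : PA Q E) : DATE Q E Unit :=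
  { init := π.init, th0 := (), bad := π.bad,
    delta := {d | d.cond = (fun _ => true) ∧ d.act = id ∧ d.tgt = π.next d.src d.ev} }

/-- The flow-sensitive residual `residual₂(D, P)`. -/
def DATE.residual2 {α Q E Θ : Type*} (D : DATE Q E Θ) (P : SProg α E) : DATE Q E Θ :=
  (D.restrict {d | ∃ t ∈ P.projAll, D.Uses t d}).reachReduce

/-- Consecutive application of the flow-sensitive residual over a list of
static program over-approximations. -/
def DATE.residual2List {α Q E Θ : Type*} (D : DATE Q E Θ) :
    List (SProg α E) → DATE Q E Θ
  | [] => D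
  | P :: Ps => DATE.residual2List (D.residual2 P) Ps

section Aux

namespace DATE

variable {Q E Θ : Type*}

lemma run_append' (D : DATE Q E Θ) (s : Q × Θ) (t1 t2 : List E) :
    D.run s (t1 ++ t2) = D.run (D.run s t1) t2 := List.foldl_append

lemma run_snoc (D : DATE Q E Θ) (s : Q × Θ) (t : List E) (e : E) :
    D.run s (t ++ [e]) = D.step (D.run s t) e := run_append' D s t [e]

lemma approxRun_append' (D : DATE Q E Θ) (S : Set Q) (t1 t2 : List E) :
    D.approxRun S (t1 ++ t2) = D.approxRun (D.approxRun S t1) t2 := List.foldl_append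

lemma approxRun_mono (D : DATE Q E Θ) {S S' : Set Q} (h : S ⊆ S') :
    ∀ t : List E, D.approxRun S t ⊆ D.approxRun S' t := by
  intro t
  induction t generalizing S S' with
  | nil => exact h
  | cons e t ih =>
    refine ih (fun q' hq' => ?_)
    obtain ⟨q, hq, hstep⟩ := hq'
    exact ⟨q, h hq, hstep⟩

lemma step_eq_of_fires (D D' : DATE Q E Θ) (hdet : D.Deterministic)
    (hsub : D'.delta ⊆ D.delta) (s : Q × Θ) (e : E)
    (d : DTrans Q E Θ) (hd : d ∈ D'.delta) (hsrc : d.src = s.1) (hev : d.ev = e)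
    (hc : d.cond s.2 = true) :
    D'.step s e = (d.tgt, d.act s.2) := by
  have h : ∃ d ∈ D'.delta, d.src = s.1 ∧ d.ev = e ∧ d.cond s.2 = true := ⟨d, hd, hsrc, hev, hc⟩
  rw [step, dif_pos h]
  obtain ⟨hd', hsrc', hev', hc'⟩ := h.choose_spec
  have heq : h.choose = d := by
    by_contra hne
    exact hdet _ (hsub hd') _ (hsub hd) (hsrc'.trans hsrc.symm) (hev'.trans hev.symm) hne s.2
      ⟨hc', hc⟩
  rw [heq]

lemma step_stay (D : DATE Q E Θ) (s : Q × Θ) (e : E)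
    (h : ¬ ∃ d ∈ D.delta, d.src = s.1 ∧ d.ev = e ∧ d.cond s.2 = true) :
    D.step s e = s := by rw [step, dif_neg h]

lemma step_approxStep (D : DATE Q E Θ) (s : Q × Θ) (e : E) :
    D.ApproxStep s.1 e (D.step s e).1 := by
  by_cases h : ∃ d ∈ D.delta, d.src = s.1 ∧ d.ev = e ∧ d.cond s.2 = true
  · obtain ⟨hd, hsrc, hev, hc⟩ := h.choose_spec
    rw [step, dif_pos h]
    exact Or.inl ⟨h.choose, hd, hsrc, hev, rfl, fun hall => by simp [hall s.2] at hc⟩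
  · rw [step, dif_neg h]
    exact Or.inr ⟨rfl, fun ⟨d, hd, hsrc, hev, _, hall⟩ => h ⟨d, hd, hsrc, hev, hall s.2⟩⟩

lemma run_mem_approxRun (D : DATE Q E Θ) :
    ∀ (t : List E) (S : Set Q) (s : Q × Θ), s.1 ∈ S → (D.run s t).1 ∈ D.approxRun S t := by
  intro t
  induction t with
  | nil => intro S s hs; exact hs
  | cons e t ih =>
    intro S s hs
    exact ih (D.approxSet S e) (D.step s e) ⟨s.1, hs, step_approxStep D s e⟩

lemma reach_refl (D : DATE Q E Θ) (q : Q) : D.Reach q q := ⟨[], rfl⟩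

lemma reach_trans (D : DATE Q E Θ) {q q' q'' : Q} (h : D.Reach q q') (h' : D.Reach q' q'') :
    D.Reach q q'' := by
  obtain ⟨t1, h1⟩ := h
  obtain ⟨t2, h2⟩ := h'
  exact ⟨t1 ++ t2, by rw [approxRun_append']; exact approxRun_mono D (Set.singleton_subset_iff.mpr h1) t2 h2⟩

lemma reach_of_approxStep (D : DATE Q E Θ) {q q' : Q} {e : E} (h : D.ApproxStep q e q') :
    D.Reach q q' := ⟨[e], ⟨q, rfl, h⟩⟩

/-- One-step relation underlying the always-possible static steps. -/
def Rrel (D : DATE Q E Θ) (q q' : Q) : Prop :=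
  ∃ d ∈ D.delta, d.src = q ∧ d.tgt = q' ∧ ¬ ∀ θ : Θ, d.cond θ = false

lemma rstar_reach (D : DATE Q E Θ) {q q' : Q}
    (h : Relation.ReflTransGen D.Rrel q q') : D.Reach q q' := by
  induction h with
  | refl => exact reach_refl D q
  | tail _ hbc ih =>
    obtain ⟨d, hd, hsrc, htgt, hnf⟩ := hbc
    exact reach_trans D ih (reach_of_approxStep D (Or.inl ⟨d, hd, hsrc, rfl, htgt, hnf⟩))

lemma step_rrel_or_eq (D D' : DATE Q E Θ) (hsub : D'.delta ⊆ D.delta) (s : Q × Θ) (e : E) :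
    D'.step s e = s ∨ D.Rrel s.1 (D'.step s e).1 := by
  by_cases h : ∃ d ∈ D'.delta, d.src = s.1 ∧ d.ev = e ∧ d.cond s.2 = true
  · obtain ⟨hd, hsrc, _, hc⟩ := h.choose_spec
    right
    rw [step, dif_pos h]
    exact ⟨h.choose, hsub hd, hsrc, rfl, fun hall => by simp [hall s.2] at hc⟩
  · exact Or.inl (step_stay D' s e h)

lemma reachReduce_delta_subset (D : DATE Q E Θ) : D.reachReduce.delta ⊆ D.delta :=
  fun _ hd => hd.1

/-- The reachability reduction preserves the verdict on every trace. -/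
lemma reachReduce_sat_iff (D : DATE Q E Θ) (hdet : D.Deterministic) (s : List E) :
    Sat s D.reachReduce ↔ Sat s D := by
  set R := D.reachReduce with hR
  have hsub : R.delta ⊆ D.delta := reachReduce_delta_subset D
  have hinv : ∀ t' : List E,
      (R.run (D.init, D.th0) t' = D.run (D.init, D.th0) t'
        ∧ D.BadAfter (D.run (D.init, D.th0) t').1)
      ∨ (∃ q0 : Q, (¬ ∃ q' ∈ D.bad, D.Reach q0 q')
          ∧ Relation.ReflTransGen D.Rrel q0 (D.run (D.init, D.th0) t').1
          ∧ Relation.ReflTransGen D.Rrel q0 (R.run (D.init, D.th0) t').1) := by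
    intro t'
    induction t' using List.reverseRecOn with
    | nil =>
      by_cases hb : D.BadAfter D.init
      · exact Or.inl ⟨rfl, hb⟩
      · refine Or.inr ⟨D.init, fun ⟨q', hq', hr⟩ => hb ⟨reach_refl D D.init, q', hq', hr⟩,
          Relation.ReflTransGen.refl, Relation.ReflTransGen.refl⟩
    | append_singleton t' e ih =>
      rcases ih with ⟨heq, hba⟩ | ⟨q0, hnb, hr1, hr2⟩
      · rw [run_snoc, run_snoc, heq]
        set c := D.run (D.init, D.th0) t' with hc
        by_cases hf : ∃ d ∈ D.delta, d.src = c.1 ∧ d.ev = e ∧ d.cond c.2 = true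
        · obtain ⟨d, hd, hsrc, hev, hcnd⟩ := hf
          have hstepq : D.ApproxStep c.1 e d.tgt :=
            Or.inl ⟨d, hd, hsrc, hev, rfl, fun hall => by simp [hall c.2] at hcnd⟩
          have htgtU : D.Useful d.tgt := by
            by_cases hbt : D.BadAfter d.tgt
            · exact Or.inl hbt
            · exact Or.inr ⟨hbt, c.1, e, hba, hstepq⟩
          have hdR : d ∈ R.delta := ⟨hd, by rw [hsrc]; exact Or.inl hba, htgtU⟩
          have hDs : D.step c e = (d.tgt, d.act c.2) :=
            step_eq_of_fires D D hdet (fun _ h => h) c e d hd hsrc hev hcnd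
          have hRs : R.step c e = (d.tgt, d.act c.2) :=
            step_eq_of_fires D R hdet hsub c e d hdR hsrc hev hcnd
          rw [hDs, hRs]
          by_cases hbt : D.BadAfter d.tgt
          · exact Or.inl ⟨rfl, hbt⟩
          · refine Or.inr ⟨d.tgt, fun ⟨q', hq', hr⟩ => hbt
              ⟨reach_trans D hba.1 (reach_of_approxStep D hstepq), q', hq', hr⟩,
              Relation.ReflTransGen.refl, Relation.ReflTransGen.refl⟩
        · have hDs : D.step c e = c := step_stay D c e hf
          have hRs : R.step c e = c := step_stay R c e
            (fun ⟨d, hd, hh⟩ => hf ⟨d, hsub hd, hh⟩)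
          rw [hDs, hRs]
          exact Or.inl ⟨rfl, hba⟩
      · refine Or.inr ⟨q0, hnb, ?_, ?_⟩
        · rw [run_snoc]
          rcases step_rrel_or_eq D D (fun _ h => h) (D.run (D.init, D.th0) t') e with h | h
          · rw [h]; exact hr1
          · exact hr1.tail h
        · rw [run_snoc]
          rcases step_rrel_or_eq D R hsub (R.run (D.init, D.th0) t') e with h | h
          · rw [h]; exact hr2
          · exact hr2.tail h
  have hbadeq : ∀ t' : List E,
      ((R.run (D.init, D.th0) t').1 ∈ D.bad ↔ (D.run (D.init, D.th0) t').1 ∈ D.bad) := by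
    intro t'
    rcases hinv t' with ⟨heq, _⟩ | ⟨q0, hnb, hr1, hr2⟩
    · rw [heq]
    · constructor
      · intro hb; exact absurd ⟨_, hb, rstar_reach D hr2⟩ hnb
      · intro hb; exact absurd ⟨_, hb, rstar_reach D hr1⟩ hnb
  constructor
  · intro h t' hpref hb
    exact h t' hpref ((hbadeq t').mpr hb)
  · intro h t' hpref hb
    exact h t' hpref ((hbadeq t').mp hb)

/-- Restricting to the transitions used by `t` does not change the run on prefixes of `t`. -/
lemma restrict_uses_run (D : DATE Q E Θ) (hdet : D.Deterministic) (t : List E) :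
    ∀ t' : List E, t' <+: t →
      (D.restrict {d | D.Uses t d}).run (D.init, D.th0) t' = D.run (D.init, D.th0) t' := by
  set D1 := D.restrict {d | D.Uses t d} with hD1
  have hsub : D1.delta ⊆ D.delta := fun _ hd => hd.1
  intro t'
  induction t' using List.reverseRecOn with
  | nil => intro _; rfl
  | append_singleton t' e ih =>
    intro hpref
    have hpref' : t' <+: t := ((t'.prefix_append [e]).trans hpref)
    have heq := ih hpref'
    set c := D.run (D.init, D.th0) t' with hc
    rw [run_snoc, run_snoc, heq]
    by_cases hf : ∃ d ∈ D.delta, d.src = c.1 ∧ d.ev = e ∧ d.cond c.2 = true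
    · obtain ⟨d, hd, hsrc, hev, hcnd⟩ := hf
      have huses : D.Uses t d := by
        refine ⟨fun hall => by simp [hall c.2] at hcnd, t', ?_, ?_⟩
        · rw [hev]; exact hpref
        · rw [hsrc]
          exact run_mem_approxRun D t' {D.init} (D.init, D.th0) rfl
      have hdD1 : d ∈ D1.delta := ⟨hd, huses⟩
      rw [step_eq_of_fires D D hdet (fun _ h => h) c e d hd hsrc hev hcnd,
        step_eq_of_fires D D1 hdet hsub c e d hdD1 hsrc hev hcnd]
    · rw [step_stay D c e hf, step_stay D1 c e (fun ⟨d, hd, hh⟩ => hf ⟨d, hsub hd, hh⟩)]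

lemma restrict_deterministic (D : DATE Q E Θ) (hdet : D.Deterministic)
    (δ' : Set (DTrans Q E Θ)) : (D.restrict δ').Deterministic :=
  fun d hd d' hd' h1 h2 h3 => hdet d hd.1 d' hd'.1 h1 h2 h3

end DATE

end Aux

/-- Pruning the transitions of a DATE not used by a ground trace
`t` (and applying the reachability reduction) preserves the verdict on `t`. -/
theorem prune_unused_equiv_singleton {Q E Θ : Type*} (D : DATE Q E Θ)
    (hdet : D.Deterministic) (t : List E) :
    DATE.EquivOn {t} ((D.restrict {d | D.Uses t d}).reachReduce) D := by
  intro s hs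
  rcases hs with rfl
  have hdet1 := DATE.restrict_deterministic D hdet {d | D.Uses s d}
  rw [DATE.reachReduce_sat_iff _ hdet1 s]
  have hrun := DATE.restrict_uses_run D hdet s
  constructor
  · intro h t' hpref
    have h2 := h t' hpref
    rw [← hrun t' hpref]
    exact h2
  · intro h t' hpref
    have h2 : ((D.restrict {d | D.Uses s d}).run (D.init, D.th0) t').1 ∉ D.bad := by
      rw [hrun t' hpref]; exact h t' hpref
    exact h2
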